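/- Let f : ℕ → ℝ be such that ∑_{n≥1} |Δ²f(n)| < ∞, and suppose the limit ψ := lim_{n→∞} Δf(n) exists and satisfies ψ ∉ ℤ. Then the sequence of exponential sums { ∑_{n=1}^{N} e(f(n)) : N ≥ 1 } is bounded. -/

import Mathlib

open Filter

/-- `e(x) = e^{2πix}`. -/
noncomputable def e (x : ℝ) : ℂ := Complex.exp (2 * Real.pi * Complex.I * x)

lemma e_add (x y : ℝ) : e (x + y) = e x * e y := by
  unfold e; rw [← Complex.exp_add]; push_cast; ring_nf

lemma abs_e (x : ℝ) : ‖e x‖ = 1 := by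
  unfold e
  rw [show (2 * (Real.pi : ℂ) * Complex.I * (x : ℂ)) = ((2 * Real.pi * x : ℝ) : ℂ) * Complex.I by
    push_cast; ring]
  exact Complex.norm_exp_ofReal_mul_I _

lemma abs_e_sub_e (x y : ℝ) (h : 2 * Real.pi * |x - y| ≤ 1) :
    ‖e x - e y‖ ≤ 4 * Real.pi * |x - y| := by
  have hx : e x = e y * e (x - y) := by rw [← e_add]; ring_nf
  have habs : ‖2 * (Real.pi : ℂ) * Complex.I * ((x - y : ℝ) : ℂ)‖
      = 2 * Real.pi * |x - y| := by
    rw [show (2 * (Real.pi : ℂ) * Complex.I * ((x - y : ℝ) : ℂ))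
        = ((2 * Real.pi * (x - y) : ℝ) : ℂ) * Complex.I by push_cast; ring]
    rw [norm_mul, Complex.norm_I, Complex.norm_real, Real.norm_eq_abs, abs_mul, mul_one]
    rw [abs_of_nonneg (by positivity : (0:ℝ) ≤ 2 * Real.pi)]
  calc ‖e x - e y‖ = ‖e y‖ * ‖e (x - y) - 1‖ := by
        rw [hx, ← norm_mul]; ring_nf
    _ = ‖e (x - y) - 1‖ := by rw [abs_e, one_mul]
    _ ≤ 2 * (2 * Real.pi * |x - y|) := by
        have := Complex.norm_exp_sub_one_le (x := 2 * (Real.pi : ℂ) * Complex.I * ((x - y : ℝ) : ℂ))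
          (by rw [habs]; exact h)
        rw [habs] at this; exact this
    _ = 4 * Real.pi * |x - y| := by ring

lemma e_ne_one {ψ : ℝ} (hnonint : ∀ m : ℤ, ψ ≠ (m : ℝ)) : e ψ ≠ 1 := by
  intro h
  rw [e, Complex.exp_eq_one_iff] at h
  obtain ⟨n, hn⟩ := h
  have hpi : (Real.pi : ℂ) ≠ 0 := Complex.ofReal_ne_zero.mpr Real.pi_ne_zero
  have h2 : (2 * (Real.pi : ℂ) * Complex.I) ≠ 0 := by
    exact mul_ne_zero (mul_ne_zero two_ne_zero hpi) Complex.I_ne_zero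
  have : (ψ : ℂ) = (n : ℂ) := by
    have h3 : (ψ : ℂ) * (2 * (Real.pi : ℂ) * Complex.I)
        = (n : ℂ) * (2 * (Real.pi : ℂ) * Complex.I) := by rw [← hn]; ring
    exact mul_right_cancel₀ h2 h3
  exact hnonint n (by exact_mod_cast this)

lemma abel_sum (a g : ℕ → ℂ) (m : ℕ) : ∀ N, m ≤ N →
    ∑ n ∈ Finset.Icc m N, (a n - a (n + 1)) * g n
      = a m * g m - a (N + 1) * g N + ∑ n ∈ Finset.Ico m N, a (n + 1) * (g (n + 1) - g n) := by
  intro N hN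
  induction N, hN using Nat.le_induction with
  | base => simp; ring
  | succ N hN ih =>
      rw [Finset.sum_Icc_succ_top (by omega), ih, Finset.sum_Ico_succ_top (by omega)]
      ring

/-- if `∑_{n≥1} |Δ²f(n)| < ∞` and `Δf(n) → ψ` with `ψ ∉ ℤ`, then the
exponential sums `∑_{n=1}^{N} e(f(n))` are bounded. -/
theorem stmt_4 (f : ℕ → ℝ)
    (hsum : Summable fun n : ℕ => |f (n + 1 + 2) - 2 * f (n + 1 + 1) + f (n + 1)|)
    (ψ : ℝ) (hψ : Tendsto (fun n : ℕ => f (n + 1) - f n) atTop (nhds ψ))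
    (hnonint : ∀ m : ℤ, ψ ≠ (m : ℝ)) :
    ∃ M : ℝ, ∀ N : ℕ, 1 ≤ N →
      ‖∑ n ∈ Finset.Icc 1 N, e (f n)‖ ≤ M := by
  set d : ℕ → ℝ := fun n => f (n + 1) - f n with hd
  set a : ℕ → ℂ := fun n => e (f n) with ha
  set F : ℕ → ℝ := fun n => |f (n + 2) - 2 * f (n + 1) + f n| with hF
  have hFsum : Summable F := by
    rw [← summable_nat_add_iff 1]
    exact hsum
  have hFnn : ∀ n, 0 ≤ F n := fun n => abs_nonneg _
  set T : ℝ := ∑' n, F n with hT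
  have hTnn : 0 ≤ T := tsum_nonneg hFnn
  have hπ : 0 < Real.pi := Real.pi_pos
  set c : ℝ := ‖1 - e ψ‖ with hc
  have hc0 : 0 < c := by
    rw [hc]
    rw [norm_pos_iff]
    intro h
    exact e_ne_one hnonint (by linear_combination -h)
  -- eventual bounds
  have hed : Tendsto (fun n : ℕ => e (d n)) atTop (nhds (e ψ)) := by
    have : Continuous e := by unfold e; continuity
    exact (this.tendsto ψ).comp hψ
  have h1 : ∀ᶠ n in atTop, ‖e (d n) - e ψ‖ < c / 2 := by
    have := Metric.tendsto_atTop.mp hed (c / 2) (by linarith)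
    filter_upwards [eventually_atTop.mpr this] with n hn
    simpa [Complex.dist_eq] using hn
  have h2 : ∀ᶠ n in atTop, |d n - ψ| < 1 / (8 * Real.pi) := by
    have := Metric.tendsto_atTop.mp hψ (1 / (8 * Real.pi)) (by positivity)
    filter_upwards [eventually_atTop.mpr this] with n hn
    simpa [Real.dist_eq] using hn
  obtain ⟨n₁, hn₁⟩ := eventually_atTop.mp (h1.and h2)
  set n₀ : ℕ := max n₁ 1 with hn₀
  have hn₀1 : 1 ≤ n₀ := le_max_right _ _
  have hlow : ∀ n, n₀ ≤ n → c / 2 ≤ ‖1 - e (d n)‖ := by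
    intro n hn
    have h := (hn₁ n (le_trans (le_max_left _ _) hn)).1
    have htri : c ≤ ‖1 - e (d n)‖ + ‖e (d n) - e ψ‖ := by
      calc c = ‖(1 - e (d n)) + (e (d n) - e ψ)‖ := by rw [hc]; ring_nf
        _ ≤ _ := norm_add_le _ _
    linarith
  have hne : ∀ n, n₀ ≤ n → (1 : ℂ) - e (d n) ≠ 0 := by
    intro n hn h
    have := hlow n hn
    rw [h] at this
    simp at this
    linarith
  set g : ℕ → ℂ := fun n => (1 - e (d n))⁻¹ with hg
  have gb : ∀ n, n₀ ≤ n → ‖g n‖ ≤ 2 / c := by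
    intro n hn
    rw [hg]
    simp only [norm_inv]
    rw [show (2 : ℝ) / c = (c / 2)⁻¹ by field_simp]
    exact inv_anti₀ (by linarith) (hlow n hn)
  have key : ∀ n, n₀ ≤ n → a n = (a n - a (n + 1)) * g n := by
    intro n hn
    have h1 : a (n + 1) = a n * e (d n) := by
      rw [ha]
      simp only
      rw [← e_add]
      congr 1
      simp [hd]
    rw [h1, hg]
    have := hne n hn
    field_simp
  have hdd : ∀ n, n₀ ≤ n → 2 * Real.pi * |d (n + 1) - d n| ≤ 1 := by
    intro n hn
    have ha1 := (hn₁ n (le_trans (le_max_left _ _) hn)).2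
    have ha2 := (hn₁ (n + 1) (by omega)).2
    have htri : |d (n + 1) - d n| ≤ |d (n + 1) - ψ| + |d n - ψ| := by
      have := abs_sub_le (d (n + 1)) ψ (d n)
      rwa [abs_sub_comm ψ (d n)] at this
    have h8 : 0 < 8 * Real.pi := by positivity
    have : |d (n + 1) - d n| ≤ 1 / (4 * Real.pi) := by
      have : 1 / (8 * Real.pi) + 1 / (8 * Real.pi) = 1 / (4 * Real.pi) := by
        field_simp; ring
      linarith
    calc 2 * Real.pi * |d (n + 1) - d n| ≤ 2 * Real.pi * (1 / (4 * Real.pi)) := by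
          apply mul_le_mul_of_nonneg_left this (by positivity)
      _ = 1 / 2 := by field_simp; ring
      _ ≤ 1 := by norm_num
  have gdiff : ∀ n, n₀ ≤ n → ‖g (n + 1) - g n‖ ≤ 16 * Real.pi / c ^ 2 * F n := by
    intro n hn
    have hz := hne (n + 1) (by omega)
    have hw := hne n hn
    have hFn : |d (n + 1) - d n| = F n := by
      rw [hF, hd]
      simp only
      congr 1
      ring
    rw [hg]
    simp only
    rw [inv_sub_inv hz hw]
    rw [norm_div, norm_mul]
    have hnum : ‖(1 - e (d n)) - (1 - e (d (n + 1)))‖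
        ≤ 4 * Real.pi * F n := by
      rw [show (1 : ℂ) - e (d n) - (1 - e (d (n + 1))) = e (d (n + 1)) - e (d n) by ring]
      rw [← hFn]
      exact abs_e_sub_e _ _ (hdd n hn)
    have hden : c / 2 * (c / 2) ≤ ‖1 - e (d (n + 1))‖ * ‖1 - e (d n)‖ :=
      mul_le_mul (hlow _ (by omega)) (hlow _ hn) (by linarith) (norm_nonneg _)
    calc ‖(1 - e (d n)) - (1 - e (d (n + 1)))‖
          / (‖1 - e (d (n + 1))‖ * ‖1 - e (d n)‖)
        ≤ (4 * Real.pi * F n) / (c / 2 * (c / 2)) := by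
          apply div_le_div₀ (by positivity) hnum (by positivity) hden
      _ = 16 * Real.pi / c ^ 2 * F n := by field_simp; ring
  set B : ℝ := 4 / c + 16 * Real.pi / c ^ 2 * T with hB
  have hBnn : 0 ≤ B := by
    rw [hB]; positivity
  refine ⟨(n₀ : ℝ) + B, fun N hN => ?_⟩
  by_cases hcase : N < n₀
  · calc ‖∑ n ∈ Finset.Icc 1 N, e (f n)‖
        ≤ ∑ n ∈ Finset.Icc 1 N, ‖e (f n)‖ := norm_sum_le _ _
      _ = ((Finset.Icc 1 N).card : ℝ) := by
          rw [Finset.sum_congr rfl fun n _ => abs_e (f n), Finset.sum_const,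
            nsmul_eq_mul, mul_one]
      _ ≤ (n₀ : ℝ) + B := by
          rw [Nat.card_Icc]
          have h9 : N + 1 - 1 = N := by omega
          rw [h9]
          have : (N : ℝ) ≤ (n₀ : ℝ) := by exact_mod_cast le_of_lt hcase
          linarith
  · push_neg at hcase
    -- split the sum
    have hsplit : ∑ n ∈ Finset.Icc 1 N, a n
        = ∑ n ∈ Finset.Ico 1 n₀, a n + ∑ n ∈ Finset.Icc n₀ N, a n := by
      rw [← Finset.Ico_add_one_right_eq_Icc, ← Finset.Ico_add_one_right_eq_Icc,
        ← Finset.sum_Ico_consecutive _ hn₀1 (by omega)]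
    have htail : ‖∑ n ∈ Finset.Icc n₀ N, a n‖ ≤ B := by
      have heq : ∑ n ∈ Finset.Icc n₀ N, a n
          = ∑ n ∈ Finset.Icc n₀ N, (a n - a (n + 1)) * g n := by
        apply Finset.sum_congr rfl
        intro n hn
        rw [Finset.mem_Icc] at hn
        exact key n hn.1
      rw [heq, abel_sum a g n₀ N hcase]
      have hterm : ∀ n ∈ Finset.Ico n₀ N,
          ‖a (n + 1) * (g (n + 1) - g n)‖ ≤ 16 * Real.pi / c ^ 2 * F n := by
        intro n hn
        rw [Finset.mem_Ico] at hn
        rw [norm_mul, abs_e, one_mul]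
        exact gdiff n hn.1
      have hsum3 : ‖∑ n ∈ Finset.Ico n₀ N, a (n + 1) * (g (n + 1) - g n)‖
          ≤ 16 * Real.pi / c ^ 2 * T := by
        calc ‖∑ n ∈ Finset.Ico n₀ N, a (n + 1) * (g (n + 1) - g n)‖
            ≤ ∑ n ∈ Finset.Ico n₀ N, ‖a (n + 1) * (g (n + 1) - g n)‖ :=
              norm_sum_le _ _
          _ ≤ ∑ n ∈ Finset.Ico n₀ N, 16 * Real.pi / c ^ 2 * F n :=
              Finset.sum_le_sum hterm
          _ = 16 * Real.pi / c ^ 2 * ∑ n ∈ Finset.Ico n₀ N, F n := by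
              rw [Finset.mul_sum]
          _ ≤ 16 * Real.pi / c ^ 2 * T := by
              apply mul_le_mul_of_nonneg_left _ (by positivity)
              exact Summable.sum_le_tsum _ (fun n _ => hFnn n) hFsum
      calc ‖a n₀ * g n₀ - a (N + 1) * g N
              + ∑ n ∈ Finset.Ico n₀ N, a (n + 1) * (g (n + 1) - g n)‖
          ≤ ‖a n₀ * g n₀ - a (N + 1) * g N‖
            + ‖∑ n ∈ Finset.Ico n₀ N, a (n + 1) * (g (n + 1) - g n)‖ :=
            norm_add_le _ _
        _ ≤ (‖a n₀ * g n₀‖ + ‖a (N + 1) * g N‖)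
            + 16 * Real.pi / c ^ 2 * T := by
            exact add_le_add (norm_sub_le _ _) hsum3
        _ ≤ (2 / c + 2 / c) + 16 * Real.pi / c ^ 2 * T := by
            have g1 : ‖a n₀ * g n₀‖ ≤ 2 / c := by
              rw [norm_mul, abs_e, one_mul]; exact gb n₀ le_rfl
            have g2 : ‖a (N + 1) * g N‖ ≤ 2 / c := by
              rw [norm_mul, abs_e, one_mul]; exact gb N hcase
            linarith
        _ = B := by rw [hB]; ring
    have hhead : ‖∑ n ∈ Finset.Ico 1 n₀, a n‖ ≤ (n₀ : ℝ) := by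
      calc ‖∑ n ∈ Finset.Ico 1 n₀, a n‖
          ≤ ∑ n ∈ Finset.Ico 1 n₀, ‖a n‖ := norm_sum_le _ _
        _ = ((Finset.Ico 1 n₀).card : ℝ) := by
            rw [Finset.sum_congr rfl fun n _ => abs_e (f n), Finset.sum_const,
              nsmul_eq_mul, mul_one]
        _ ≤ (n₀ : ℝ) := by
            rw [Nat.card_Ico]
            exact_mod_cast Nat.sub_le n₀ 1
    calc ‖∑ n ∈ Finset.Icc 1 N, a n‖
        ≤ ‖∑ n ∈ Finset.Ico 1 n₀, a n‖
          + ‖∑ n ∈ Finset.Icc n₀ N, a n‖ := by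
          rw [hsplit]; exact norm_add_le _ _
      _ ≤ (n₀ : ℝ) + B := add_le_add hhead htail
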